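/- arXiv:1508.03425 — 2 statements merged into one kernel-verified Lean document; each statement's English description precedes it below -/
import Mathlib

section
/- Let c ≥ 1 be a natural number and let w be a Gauss word of length 2c. Then for all assignments x, y : Fin c → Bool, one has (∀ b : Fin (2c), d_b(x) + d_b(y) = c) if and only if y is the pointwise Boolean negation of x. Consequently, the 2^c assignments split into exactly 2^{c−1} disjoint pairs whose warping degree sequences sum to the constant sequence (c, c, …, c), and this collection of pairs is unique. This is property (iii) of the warping matrix. -/
namespace Warping

/-- A Gauss word of length `2c`: every letter occurs at exactly two positions. -/
def IsGaussWord (c : ℕ) (w : Fin (2*c) → Fin c) : Prop :=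
  ∀ i : Fin c, (Finset.univ.filter (fun j => w j = i)).card = 2

/-- The cyclic successor of an index. -/
def next {n : ℕ} (b : Fin n) : Fin n :=
  ⟨((b : ℕ) + 1) % n, Nat.mod_lt _ (Nat.lt_of_le_of_lt (Nat.zero_le _) b.isLt)⟩

/-- `j` is the first (smaller) of the two positions of its letter. -/
def isFirst (c : ℕ) (w : Fin (2*c) → Fin c) (j : Fin (2*c)) : Prop :=
  ∀ j' : Fin (2*c), w j' = w j → j ≤ j'

/-- Under the assignment `x`, position `j` is passed under. -/
def passedUnder (c : ℕ) (w : Fin (2*c) → Fin c) (x : Fin c → Bool) (j : Fin (2*c)) : Prop :=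
  (x (w j) = true) ↔ isFirst c w j

/-- Time at which position `j` is met in the cyclic traversal starting at base `b`. -/
def time (c : ℕ) (b j : Fin (2*c)) : ℕ := ((j : ℕ) + 2*c - (b : ℕ)) % (2*c)

/-- The letter `i` is a warping crossing for assignment `x` and base `b`: the position of `i`
met earlier in the cyclic traversal starting at `b` is passed under. -/
def IsWarpingCrossing (c : ℕ) (w : Fin (2*c) → Fin c) (x : Fin c → Bool)
    (b : Fin (2*c)) (i : Fin c) : Prop :=
  ∃ j : Fin (2*c), w j = i ∧ (∀ j' : Fin (2*c), w j' = i → time c b j ≤ time c b j') ∧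
    passedUnder c w x j

open scoped Classical in
/-- The warping degree of the assignment `x` with base point `b`. -/
noncomputable def warpingDegree (c : ℕ) (w : Fin (2*c) → Fin c) (x : Fin c → Bool)
    (b : Fin (2*c)) : ℕ :=
  (Finset.univ.filter (fun i => IsWarpingCrossing c w x b i)).card

/-- The step `d_{b+1}(x) - d_b(x)` of the warping degree sequence. -/
noncomputable def step (c : ℕ) (w : Fin (2*c) → Fin c) (x : Fin c → Bool) (b : Fin (2*c)) : ℤ :=
  (warpingDegree c w x (next b) : ℤ) - (warpingDegree c w x b : ℤ)

/- ------------------- auxiliary lemmas ------------------- -/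

section Aux

variable {c : ℕ} {w : Fin (2*c) → Fin c}

lemma time_eq (b j : Fin (2*c)) :
    time c b j = if (b:ℕ) ≤ (j:ℕ) then (j:ℕ) - b else (j:ℕ) + 2*c - b := by
  have hb := b.isLt
  have hj := j.isLt
  unfold time
  split
  · next h =>
    have : (j:ℕ) + 2*c - b = ((j:ℕ) - b) + 2*c := by omega
    rw [this, Nat.add_mod_right, Nat.mod_eq_of_lt (by omega)]
  · next h =>
    rw [Nat.mod_eq_of_lt (by omega)]

lemma time_lt (b j : Fin (2*c)) : time c b j < 2*c := by
  have hb := b.isLt; have hj := j.isLt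
  rw [time_eq]; split <;> omega

lemma time_self (b : Fin (2*c)) : time c b b = 0 := by
  rw [time_eq]; simp

lemma time_inj (b : Fin (2*c)) {j j' : Fin (2*c)} (h : time c b j = time c b j') : j = j' := by
  have hb := b.isLt; have hj := j.isLt; have hj' := j'.isLt
  rw [time_eq, time_eq] at h
  apply Fin.ext
  split at h <;> split at h <;> omega

lemma next_coe (b : Fin (2*c)) :
    ((next b : Fin (2*c)) : ℕ) = if (b:ℕ) + 1 = 2*c then 0 else (b:ℕ) + 1 := by
  have hb := b.isLt
  show ((b:ℕ) + 1) % (2*c) = _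
  split
  · next h => rw [h, Nat.mod_self]
  · next h => exact Nat.mod_eq_of_lt (by omega)

lemma time_next (b : Fin (2*c)) {j : Fin (2*c)} (hj : j ≠ b) :
    time c (next b) j + 1 = time c b j := by
  have hb := b.isLt; have hjl := j.isLt
  have hne : (j:ℕ) ≠ (b:ℕ) := fun h => hj (Fin.ext h)
  rw [time_eq, time_eq, next_coe]
  split <;> split <;> split <;> omega

lemma time_next_self (b : Fin (2*c)) : time c (next b) b = 2*c - 1 := by
  have hb := b.isLt
  rw [time_eq, next_coe]
  split <;> split <;> omega

/-- The two positions of a letter. -/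
lemma two_positions (hw : IsGaussWord c w) (i : Fin c) :
    ∃ j₁ j₂ : Fin (2*c), j₁ ≠ j₂ ∧ w j₁ = i ∧ w j₂ = i ∧
      ∀ j, w j = i → j = j₁ ∨ j = j₂ := by
  obtain ⟨a, b, hab, hs⟩ := Finset.card_eq_two.1 (hw i)
  refine ⟨a, b, hab, ?_, ?_, ?_⟩
  · have : a ∈ Finset.univ.filter (fun j => w j = i) := by rw [hs]; simp
    simpa using this
  · have : b ∈ Finset.univ.filter (fun j => w j = i) := by rw [hs]; simp
    simpa using this
  · intro j hj
    have : j ∈ Finset.univ.filter (fun j => w j = i) := by simp [hj]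
    rw [hs] at this
    simpa using this

lemma passedUnder_neg (x : Fin c → Bool) (j : Fin (2*c)) :
    passedUnder c w (fun i => !(x i)) j ↔ ¬ passedUnder c w x j := by
  unfold passedUnder
  cases hx : x (w j) <;> simp [hx]

/-- Exactly one of the two positions of a letter is first. -/
lemma isFirst_iff_not (hw : IsGaussWord c w) {j j' : Fin (2*c)} (hne : j ≠ j')
    (hww : w j = w j') : isFirst c w j ↔ ¬ isFirst c w j' := by
  obtain ⟨j₁, j₂, h12, hw1, hw2, hall⟩ := two_positions hw (w j)
  have hall' : ∀ k, w k = w j → k = j ∨ k = j' := by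
    intro k hk
    rcases hall k hk with rfl | rfl <;>
      rcases hall j rfl with rfl | rfl <;>
      rcases hall j' hww.symm with h | h <;> tauto
  have h1 : isFirst c w j ↔ j ≤ j' := by
    constructor
    · intro h; exact h j' hww.symm
    · intro h k hk
      rcases hall' k hk with rfl | rfl
      · exact le_refl _
      · exact h
  have h2 : isFirst c w j' ↔ j' ≤ j := by
    constructor
    · intro h; exact h j hww
    · intro h k hk
      rcases hall' k (by rw [hk, hww]) with rfl | rfl
      · exact h
      · exact le_refl _
  rw [h1, h2]
  have : (j:ℕ) ≠ (j':ℕ) := fun h => hne (Fin.ext h)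
  constructor
  · intro h h'
    exact hne (le_antisymm h h')
  · intro h
    rcases le_total j j' with h' | h'
    · exact h'
    · exact absurd h' h

/-- At the two positions of one letter, exactly one is passed under. -/
lemma passedUnder_iff_not (hw : IsGaussWord c w) (x : Fin c → Bool) {j j' : Fin (2*c)}
    (hne : j ≠ j') (hww : w j = w j') :
    passedUnder c w x j ↔ ¬ passedUnder c w x j' := by
  unfold passedUnder
  rw [hww, isFirst_iff_not hw hne hww]
  by_cases h : isFirst c w j' <;> cases hx : x (w j') <;> simp [h, hx]

/-- If `j` is a minimizer of the time to base `b` among positions of `i`, then `i` is a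
warping crossing iff `j` is passed under. -/
lemma crossing_iff_min (x : Fin c → Bool) {b j : Fin (2*c)} {i : Fin c}
    (hj : w j = i) (hmin : ∀ j', w j' = i → time c b j ≤ time c b j') :
    IsWarpingCrossing c w x b i ↔ passedUnder c w x j := by
  constructor
  · rintro ⟨k, hk, hkmin, hku⟩
    have : k = j := time_inj b (le_antisymm (hkmin j hj) (hmin k hk))
    rwa [this] at hku
  · intro h
    exact ⟨j, hj, hmin, h⟩

lemma crossing_neg (hw : IsGaussWord c w) (x : Fin c → Bool) (b : Fin (2*c)) (i : Fin c) :
    IsWarpingCrossing c w (fun i => !(x i)) b i ↔ ¬ IsWarpingCrossing c w x b i := by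
  obtain ⟨j₁, j₂, h12, hw1, hw2, hall⟩ := two_positions hw i
  rcases le_total (time c b j₁) (time c b j₂) with h | h
  · have hmin : ∀ j', w j' = i → time c b j₁ ≤ time c b j' := by
      intro j' hj'; rcases hall j' hj' with rfl | rfl
      · exact le_refl _
      · exact h
    rw [crossing_iff_min _ hw1 hmin, crossing_iff_min _ hw1 hmin, passedUnder_neg]
  · have hmin : ∀ j', w j' = i → time c b j₂ ≤ time c b j' := by
      intro j' hj'; rcases hall j' hj' with rfl | rfl
      · exact h
      · exact le_refl _
    rw [crossing_iff_min _ hw2 hmin, crossing_iff_min _ hw2 hmin, passedUnder_neg]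

open scoped Classical in
lemma degree_add_neg (hw : IsGaussWord c w) (x : Fin c → Bool) (b : Fin (2*c)) :
    warpingDegree c w x b + warpingDegree c w (fun i => !(x i)) b = c := by
  classical
  unfold warpingDegree
  have : (Finset.univ.filter (fun i => IsWarpingCrossing c w (fun i => !(x i)) b i))
      = (Finset.univ.filter (fun i => ¬ IsWarpingCrossing c w x b i)) := by
    apply Finset.filter_congr
    intro i _
    simp [crossing_neg hw x b i]
  rw [this, Finset.card_filter_add_card_filter_not]
  simp

open scoped Classical in
/-- The step of the warping degree sequence reads off whether `b` is passed under. -/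
lemma step_eq (hw : IsGaussWord c w) (x : Fin c → Bool) (b : Fin (2*c)) :
    step c w x b = if passedUnder c w x b then -1 else 1 := by
  classical
  set i₀ := w b with hi₀
  obtain ⟨j₁, j₂, h12, hw1, hw2, hall⟩ := two_positions hw i₀
  -- the other position of i₀
  obtain ⟨b₂, hb₂w, hb₂ne⟩ : ∃ b₂, w b₂ = i₀ ∧ b₂ ≠ b := by
    rcases hall b rfl with rfl | rfl
    · exact ⟨j₂, hw2, fun h => h12 h.symm⟩
    · exact ⟨j₁, hw1, h12⟩
  -- crossing at base b for letter i₀ iff passedUnder at b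
  have hminb : ∀ j', w j' = i₀ → time c b b ≤ time c b j' := by
    intro j' _; rw [time_self]; exact Nat.zero_le _
  have hcb : IsWarpingCrossing c w x b i₀ ↔ passedUnder c w x b :=
    crossing_iff_min x rfl hminb
  -- crossing at base (next b) for letter i₀ iff passedUnder at b₂
  have hminb2 : ∀ j', w j' = i₀ → time c (next b) b₂ ≤ time c (next b) j' := by
    intro j' hj'
    rcases hall j' hj' with rfl | rfl <;> rcases hall b rfl with h | h <;>
      rcases hall b₂ hb₂w with h' | h' <;>
      first
        | exact le_refl _
        | (rw [time_next_self]; have := time_lt (c := c) (next b) b₂; omega)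
        | (subst h; subst h'; first | exact le_refl _ | (exact absurd rfl hb₂ne) |
            (rw [time_next_self]; have := time_lt (c := c) (next b) b₂; omega))
  have hcnb : IsWarpingCrossing c w x (next b) i₀ ↔ passedUnder c w x b₂ :=
    crossing_iff_min x hb₂w hminb2
  -- passedUnder at b₂ iff not at b
  have hpb2 : passedUnder c w x b₂ ↔ ¬ passedUnder c w x b :=
    passedUnder_iff_not hw x hb₂ne hb₂w
  -- crossings for other letters unchanged
  have hother : ∀ i : Fin c, i ≠ i₀ →
      (IsWarpingCrossing c w x (next b) i ↔ IsWarpingCrossing c w x b i) := by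
    intro i hi
    obtain ⟨k₁, k₂, hk12, hk1, hk2, hkall⟩ := two_positions hw i
    have hk1b : k₁ ≠ b := fun h => hi (by rw [← hk1, h])
    have hk2b : k₂ ≠ b := fun h => hi (by rw [← hk2, h])
    rcases le_total (time c b k₁) (time c b k₂) with h | h
    · have hmin : ∀ j', w j' = i → time c b k₁ ≤ time c b j' := by
        intro j' hj'; rcases hkall j' hj' with rfl | rfl
        · exact le_refl _
        · exact h
      have hmin' : ∀ j', w j' = i → time c (next b) k₁ ≤ time c (next b) j' := by
        intro j' hj'; rcases hkall j' hj' with rfl | rfl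
        · exact le_refl _
        · have e1 := time_next b hk1b
          have e2 := time_next b hk2b
          omega
      rw [crossing_iff_min x hk1 hmin, crossing_iff_min x hk1 hmin']
    · have hmin : ∀ j', w j' = i → time c b k₂ ≤ time c b j' := by
        intro j' hj'; rcases hkall j' hj' with rfl | rfl
        · exact h
        · exact le_refl _
      have hmin' : ∀ j', w j' = i → time c (next b) k₂ ≤ time c (next b) j' := by
        intro j' hj'; rcases hkall j' hj' with rfl | rfl
        · have e1 := time_next b hk1b
          have e2 := time_next b hk2b
          omega
        · exact le_refl _
      rw [crossing_iff_min x hk2 hmin, crossing_iff_min x hk2 hmin']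
  -- count
  have key : ∀ (P : Fin c → Prop) [DecidablePred P],
      (Finset.univ.filter P).card
        = ((Finset.univ.erase i₀).filter P).card + (if P i₀ then 1 else 0) := by
    intro P _
    have : (Finset.univ : Finset (Fin c)) = insert i₀ (Finset.univ.erase i₀) := by
      rw [Finset.insert_erase (Finset.mem_univ i₀)]
    nth_rewrite 1 [this]
    rw [Finset.filter_insert]
    split
    · rw [Finset.card_insert_of_notMem (by simp)]
    · simp
  have hfeq : ((Finset.univ.erase i₀).filter (fun i => IsWarpingCrossing c w x (next b) i)).card
      = ((Finset.univ.erase i₀).filter (fun i => IsWarpingCrossing c w x b i)).card := by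
    congr 1
    apply Finset.filter_congr
    intro i hi
    have : i ≠ i₀ := by simpa using (Finset.mem_erase.1 hi).1
    simp [hother i this]
  unfold step warpingDegree
  rw [key, key, hfeq]
  by_cases hp : passedUnder c w x b
  · rw [if_pos hp]
    rw [if_pos (hcb.2 hp), if_neg (by rw [hcnb, hpb2]; exact fun h => h hp)]
    push_cast
    ring
  · rw [if_neg hp]
    rw [if_neg (fun h => hp (hcb.1 h)), if_pos (hcnb.2 (hpb2.2 hp))]
    push_cast
    ring

/-- Equal warping degree sequences force equal assignments. -/
lemma seq_inj (hc : 1 ≤ c) (hw : IsGaussWord c w) {x y : Fin c → Bool}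
    (h : ∀ b : Fin (2*c), warpingDegree c w x b = warpingDegree c w y b) : x = y := by
  classical
  have hstep : ∀ b, step c w x b = step c w y b := by
    intro b; unfold step; rw [h, h]
  have hpu : ∀ b, passedUnder c w x b ↔ passedUnder c w y b := by
    intro b
    have := hstep b
    rw [step_eq hw x b, step_eq hw y b] at this
    by_cases h1 : passedUnder c w x b <;> by_cases h2 : passedUnder c w y b <;>
      simp [h1, h2] at this ⊢ <;> omega
  funext i
  obtain ⟨j₁, j₂, h12, hw1, hw2, hall⟩ := two_positions hw i
  -- WLOG j₁ ≤ j₂, get a first position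
  obtain ⟨j, hjw, hjf⟩ : ∃ j, w j = i ∧ isFirst c w j := by
    rcases le_total j₁ j₂ with h | h
    · refine ⟨j₁, hw1, fun k hk => ?_⟩
      rcases hall k (by rw [hk, hw1]) with rfl | rfl
      · exact le_refl _
      · exact h
    · refine ⟨j₂, hw2, fun k hk => ?_⟩
      rcases hall k (by rw [hk, hw2]) with rfl | rfl
      · exact h
      · exact le_refl _
  have hx : passedUnder c w x j ↔ (x i = true) := by
    unfold passedUnder; rw [hjw]; exact ⟨fun h => h.2 hjf, fun h => ⟨fun _ => hjf, fun _ => h⟩⟩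
  have hy : passedUnder c w y j ↔ (y i = true) := by
    unfold passedUnder; rw [hjw]; exact ⟨fun h => h.2 hjf, fun h => ⟨fun _ => hjf, fun _ => h⟩⟩
  have := (hx.symm.trans (hpu j)).trans hy
  cases hxi : x i <;> cases hyi : y i <;> simp [hxi, hyi] at this ⊢

end Aux

/-- Property (iii) of the warping matrix: two warping degree sequences sum to the constant
sequence `(c, c, …, c)` exactly when the assignments are pointwise negations of each other;
consequently the `2^c` assignments split uniquely into `2^(c-1)` disjoint pairs of rows
summing to `(c, c, …, c)`. -/
theorem warpingDegree_pairs (c : ℕ) (hc : 1 ≤ c) (w : Fin (2*c) → Fin c)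
    (hw : IsGaussWord c w) :
    (∀ x y : Fin c → Bool,
      (∀ b : Fin (2*c), warpingDegree c w x b + warpingDegree c w y b = c) ↔
        y = fun i => !(x i)) ∧
    (∃! P : Finset (Finset (Fin c → Bool)),
      P.card = 2^(c-1) ∧ (∀ p ∈ P, p.card = 2) ∧
      (∀ x : Fin c → Bool, ∃! p, p ∈ P ∧ x ∈ p) ∧
      (∀ p ∈ P, ∀ x ∈ p, ∀ y ∈ p, x ≠ y →
        ∀ b : Fin (2*c), warpingDegree c w x b + warpingDegree c w y b = c)) := by
  classical
  have part1 : ∀ x y : Fin c → Bool,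
      (∀ b : Fin (2*c), warpingDegree c w x b + warpingDegree c w y b = c) ↔
        y = fun i => !(x i) := by
    intro x y
    constructor
    · intro h
      have hsum := degree_add_neg hw x
      have heq : ∀ b, warpingDegree c w y b = warpingDegree c w (fun i => !(x i)) b := by
        intro b; have h1 := h b; have h2 := hsum b; omega
      exact seq_inj hc hw heq
    · rintro rfl
      exact degree_add_neg hw x
  refine ⟨part1, ?_⟩
  set neg : (Fin c → Bool) → (Fin c → Bool) := fun x i => !(x i) with hnegdef
  have hnn : ∀ x, neg (neg x) = x := by
    intro x; funext i; simp [hnegdef]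
  have hxne : ∀ x, x ≠ neg x := by
    intro x h
    have := congrFun h ⟨0, hc⟩
    simp [hnegdef] at this
  set P₀ : Finset (Finset (Fin c → Bool)) :=
    Finset.univ.image (fun x => ({x, neg x} : Finset _)) with hP₀
  have hmem : ∀ p, p ∈ P₀ ↔ ∃ x, p = ({x, neg x} : Finset _) := by
    intro p; simp [hP₀, eq_comm]
  have pair_eq : ∀ {z x : Fin c → Bool}, z ∈ ({x, neg x} : Finset _) →
      ({z, neg z} : Finset _) = {x, neg x} := by
    intro z x hz
    rcases Finset.mem_insert.1 hz with rfl | hz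
    · rfl
    · rw [Finset.mem_singleton.1 hz, hnn]
      exact Finset.pair_comm _ _
  have pair_other : ∀ {z x y : Fin c → Bool}, x ∈ ({z, neg z} : Finset _) →
      y ∈ ({z, neg z} : Finset _) → x ≠ y → y = neg x := by
    intro z x y hx hy hxy
    simp only [Finset.mem_insert, Finset.mem_singleton] at hx hy
    rcases hx with rfl | rfl <;> rcases hy with rfl | rfl
    · exact absurd rfl hxy
    · rfl
    · exact (hnn _).symm
    · exact absurd rfl hxy
  -- properties of P₀
  have hcard2 : ∀ p ∈ P₀, p.card = 2 := by
    intro p hp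
    obtain ⟨x, rfl⟩ := (hmem p).1 hp
    exact Finset.card_pair (hxne x)
  have hunique : ∀ x : Fin c → Bool, ∃! p, p ∈ P₀ ∧ x ∈ p := by
    intro x
    refine ⟨({x, neg x} : Finset _), ⟨(hmem _).2 ⟨x, rfl⟩, Finset.mem_insert_self _ _⟩, ?_⟩
    rintro q ⟨hq, hxq⟩
    obtain ⟨y, rfl⟩ := (hmem q).1 hq
    exact (pair_eq hxq).symm
  have hsumprop : ∀ p ∈ P₀, ∀ x ∈ p, ∀ y ∈ p, x ≠ y →
      ∀ b : Fin (2*c), warpingDegree c w x b + warpingDegree c w y b = c := by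
    intro p hp x hx y hy hxy
    obtain ⟨z, rfl⟩ := (hmem p).1 hp
    have : y = neg x := pair_other hx hy hxy
    exact (part1 x y).2 this
  -- cardinality of P₀
  have hcover : P₀.biUnion id = Finset.univ := by
    apply Finset.eq_univ_of_forall
    intro x
    rw [Finset.mem_biUnion]
    exact ⟨({x, neg x} : Finset _), (hmem _).2 ⟨x, rfl⟩, Finset.mem_insert_self _ _⟩
  have hdisj : ∀ p ∈ P₀, ∀ q ∈ P₀, p ≠ q → Disjoint (id p) (id q) := by
    intro p hp q hq hpq
    by_contra hnd
    obtain ⟨z, hzp, hzq⟩ := Finset.not_disjoint_iff.1 hnd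
    obtain ⟨a, rfl⟩ := (hmem p).1 hp
    obtain ⟨b, rfl⟩ := (hmem q).1 hq
    exact hpq ((pair_eq hzp).symm.trans (pair_eq hzq))
  have hsum := Finset.card_biUnion hdisj
  rw [hcover] at hsum
  have huniv : (Finset.univ : Finset (Fin c → Bool)).card = 2^c := by
    simp [Finset.card_univ]
  have hsum2 : ∑ p ∈ P₀, (id p).card = 2 * P₀.card := by
    have h2 : ∀ p ∈ P₀, (id p).card = 2 := fun p hp => hcard2 p hp
    rw [Finset.sum_congr rfl h2, Finset.sum_const, smul_eq_mul]
    ring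
  have hpow : 2^c = 2 * 2^(c-1) := by
    conv_lhs => rw [show c = (c-1)+1 by omega]
    rw [pow_succ]; ring
  have hP₀card : P₀.card = 2^(c-1) := by omega
  refine ⟨P₀, ⟨hP₀card, hcard2, hunique, hsumprop⟩, ?_⟩
  -- uniqueness
  rintro Q ⟨hQcard, hQ2, hQu, hQs⟩
  apply Finset.ext
  intro p
  constructor
  · intro hp
    obtain ⟨a, b, hab, rfl⟩ := Finset.card_eq_two.1 (hQ2 p hp)
    have hb : b = neg a := by
      have := hQs _ hp a (Finset.mem_insert_self _ _) b (by simp) hab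
      exact (part1 a b).1 this
    rw [hb]
    exact (hmem _).2 ⟨a, rfl⟩
  · intro hp
    obtain ⟨x, rfl⟩ := (hmem p).1 hp
    obtain ⟨q, ⟨hqQ, hxq⟩, _⟩ := hQu x
    obtain ⟨a, b, hab, rfl⟩ := Finset.card_eq_two.1 (hQ2 q hqQ)
    have hb : b = neg a := by
      have := hQs _ hqQ a (Finset.mem_insert_self _ _) b (by simp) hab
      exact (part1 a b).1 this
    subst hb
    have : ({x, neg x} : Finset _) = {a, neg a} := pair_eq hxq
    rw [this]
    exact hqQ

end Warping
end

section
/- Let c ≥ 1 be a natural number and let w be a Gauss word of length 2c. Then for every base b : Fin (2c), the sum over all 2^c assignments x of d_b(x) equals c · 2^{c−1}. Equivalently, every column sum of the warping matrix equals c · 2^{c−1}. -/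
namespace Warping

lemma time_inj_s10 (c : ℕ) (hc : 1 ≤ c) (b : Fin (2*c)) :
    Function.Injective (time c b) := by
  intro j j' h
  have hj : time c b j = ((j : ℕ) + (2*c - (b : ℕ))) % (2*c) := by
    unfold time; congr 1; omega
  have hj' : time c b j' = ((j' : ℕ) + (2*c - (b : ℕ))) % (2*c) := by
    unfold time; congr 1; omega
  rw [hj, hj'] at h
  have hmod : (j : ℕ) % (2*c) = (j' : ℕ) % (2*c) :=
    Nat.ModEq.add_right_cancel' _ h
  have := j.isLt
  have := j'.isLt
  rw [Nat.mod_eq_of_lt j.isLt, Nat.mod_eq_of_lt j'.isLt] at hmod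
  exact Fin.ext hmod

lemma card_filter_eval (c : ℕ) (hc : 1 ≤ c) (i : Fin c) (v : Bool) :
    (Finset.univ.filter (fun x : Fin c → Bool => x i = v)).card = 2^(c-1) := by
  classical
  have hbij : (Finset.univ.filter (fun x : Fin c → Bool => x i = v)).card
      = (Finset.univ.filter (fun x : Fin c → Bool => x i = !v)).card := by
    refine Finset.card_bij' (fun x _ => Function.update x i (!(x i)))
      (fun x _ => Function.update x i (!(x i))) ?_ ?_ ?_ ?_
    all_goals intro x hx
    all_goals simp only [Finset.mem_filter, Finset.mem_univ, true_and] at hx ⊢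
    · simp [hx]
    · simp [hx]
    · funext j
      by_cases hji : j = i
      · subst hji; simp
      · simp [Function.update_of_ne hji]
    · funext j
      by_cases hji : j = i
      · subst hji; simp
      · simp [Function.update_of_ne hji]
  have hsplit : (Finset.univ.filter (fun x : Fin c → Bool => x i = v)).card
      + (Finset.univ.filter (fun x : Fin c → Bool => ¬ (x i = v))).card
      = (Finset.univ : Finset (Fin c → Bool)).card :=
    Finset.card_filter_add_card_filter_not _
  have hneg : (Finset.univ.filter (fun x : Fin c → Bool => ¬ (x i = v)))
      = (Finset.univ.filter (fun x : Fin c → Bool => x i = !v)) := by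
    apply Finset.filter_congr
    intro x _
    cases hx : x i <;> cases v <;> simp
  have hcard : (Finset.univ : Finset (Fin c → Bool)).card = 2^c := by
    simp [Finset.card_univ]
  have hpow : 2^c = 2^(c-1) * 2 := by
    have h : c - 1 + 1 = c := Nat.succ_pred_eq_of_pos hc
    rw [← pow_succ, h]
  rw [hneg, ← hbij, hcard, hpow] at hsplit
  clear hbij hneg hcard hpow
  generalize (Finset.univ.filter (fun x : Fin c → Bool => x i = v)).card = n at hsplit ⊢
  omega

/-- Every column sum of the warping matrix equals `c * 2^(c-1)`. -/
theorem sum_warpingDegree (c : ℕ) (hc : 1 ≤ c) (w : Fin (2*c) → Fin c)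
    (hw : IsGaussWord c w) :
    ∀ b : Fin (2*c),
      ∑ x : Fin c → Bool, warpingDegree c w x b = c * 2^(c-1) := by
  intro b
  classical
  have hmin : ∀ i : Fin c, ∃ j : Fin (2*c), w j = i ∧
      ∀ j' : Fin (2*c), w j' = i → time c b j ≤ time c b j' := by
    intro i
    have hne : (Finset.univ.filter (fun j => w j = i)).Nonempty := by
      rw [← Finset.card_pos, hw i]; omega
    obtain ⟨j, hj, hm⟩ := Finset.exists_min_image _ (time c b) hne
    simp only [Finset.mem_filter, Finset.mem_univ, true_and] at hj
    refine ⟨j, hj, fun j' hj' => hm j' ?_⟩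
    simp [hj']
  choose J hJw hJmin using hmin
  have hiff : ∀ (i : Fin c) (x : Fin c → Bool),
      IsWarpingCrossing c w x b i ↔ ((x i = true) ↔ isFirst c w (J i)) := by
    intro i x
    constructor
    · rintro ⟨j, hji, hjmin, hju⟩
      have hj : j = J i :=
        time_inj_s10 c hc b (le_antisymm (hjmin _ (hJw i)) (hJmin i j hji))
      rw [hj] at hju
      simpa [passedUnder, hJw i] using hju
    · intro h
      exact ⟨J i, hJw i, hJmin i, by simpa [passedUnder, hJw i] using h⟩
  have hcount : ∀ i : Fin c,
      (Finset.univ.filter (fun x : Fin c → Bool => IsWarpingCrossing c w x b i)).card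
        = 2^(c-1) := by
    intro i
    rw [Finset.filter_congr (fun x _ => hiff i x)]
    by_cases hP : isFirst c w (J i)
    · have h1 : ∀ x ∈ (Finset.univ : Finset (Fin c → Bool)),
          ((x i = true) ↔ isFirst c w (J i)) ↔ (x i = true) := fun x _ => by simp [hP]
      rw [Finset.filter_congr h1]
      exact card_filter_eval c hc i true
    · have h1 : ∀ x ∈ (Finset.univ : Finset (Fin c → Bool)),
          ((x i = true) ↔ isFirst c w (J i)) ↔ (x i = false) := fun x _ => by simp [hP]
      rw [Finset.filter_congr h1]
      exact card_filter_eval c hc i false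
  calc ∑ x : Fin c → Bool, warpingDegree c w x b
      = ∑ x : Fin c → Bool, ∑ i : Fin c, if IsWarpingCrossing c w x b i then 1 else 0 := by
        apply Finset.sum_congr rfl
        intro x _
        rw [warpingDegree, Finset.card_filter]
    _ = ∑ i : Fin c, ∑ x : Fin c → Bool, if IsWarpingCrossing c w x b i then 1 else 0 :=
        Finset.sum_comm
    _ = ∑ i : Fin c, (Finset.univ.filter (fun x : Fin c → Bool => IsWarpingCrossing c w x b i)).card := by
        apply Finset.sum_congr rfl
        intro i _
        rw [Finset.card_filter]
    _ = ∑ _i : Fin c, 2^(c-1) := by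
        apply Finset.sum_congr rfl
        intro i _
        exact hcount i
    _ = c * 2^(c-1) := by
        simp [Finset.sum_const, Finset.card_univ]


end Warping
end
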